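/- In dimension 1, let 0 < a < b and 1 ≤ p ≤ q with 1/q − 1/p + α ≥ 0, 0 ≤ α < 1. Define on ℝ⁺ the weights u(x) = 1 on (0,1), u = n^q on (1+(n−1)a+(n−1)b, 1+(n−1)a+(n−1)b+(b−a)/2), u = n^{−q} on the rest of the n-th block, and v(x) = 1 on (0,1+b), v = n^p on (1+(n−2)a+(n−1)b, 1+(n−1)a+nb−(b−a)/2), v = n^{−p} on (1+(n−1)a+nb−(b−a)/2, 1+(n−1)a+nb), extended evenly to ℝ. Then [u,v]_{𝔄^a_{p,q,α}} ≤ a^{1/q−1/p+α} < ∞ while [u,v]_{𝔄^b_{p,q,α}} = ∞. -/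

import Mathlib

open MeasureTheory ENNReal Set

noncomputable section

def pconj (p : ℝ) : ℝ := p / (p - 1)

/-- The weight `u`: `1` on `(0,1)`, `n^q` on the first `(b-a)/2` of the `n`-th block
`(1+(n-1)(a+b), 1+n(a+b))`, and `n^{-q}` on the rest, extended evenly to `ℝ`. -/
def uW (a b q : ℝ) (x : ℝ) : ℝ≥0∞ :=
  if |x| ≤ 1 then 1 else
    let n : ℕ := ⌈(|x| - 1) / (a + b)⌉₊
    if |x| ≤ 1 + ((n : ℝ) - 1) * (a + b) + (b - a)/2 then (n : ℝ≥0∞) ^ q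
    else (n : ℝ≥0∞) ^ (-q)

/-- The weight `v`: `1` on `(0,1+b)`, `n^p` on
`(1+(n-2)a+(n-1)b, 1+(n-1)a+nb-(b-a)/2)` and `n^{-p}` on
`(1+(n-1)a+nb-(b-a)/2, 1+(n-1)a+nb)` for `n ≥ 2`, extended evenly to `ℝ`. -/
def vW (a b p : ℝ) (x : ℝ) : ℝ≥0∞ :=
  if |x| ≤ 1 + b then 1 else
    let n : ℕ := ⌈(|x| - 1 - b) / (a + b)⌉₊ + 1
    if |x| ≤ 1 + ((n : ℝ) - 1) * a + (n : ℝ) * b - (b - a)/2 then (n : ℝ≥0∞) ^ p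
    else (n : ℝ≥0∞) ^ (-p)

/-- The constant `[u,v]_{𝔄^c_{p,q,α}}`: supremum over intervals of length `≤ c` of
`ℓ(Q)^{α-1} (∫_Q u dx)^{1/q} (∫_Q v^{1-p'} dx)^{1/p'}` (Lebesgue measure, `d = 1`). -/
def frakA (c p q α : ℝ) (u v : ℝ → ℝ≥0∞) : ℝ≥0∞ :=
  ⨆ (x0 : ℝ) (l : ℝ) (_ : 0 < l ∧ l ≤ c),
    ENNReal.ofReal (l ^ (α - 1)) *
    (∫⁻ x in Set.Ioo x0 (x0 + l), u x) ^ (1/q) *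
    (∫⁻ x in Set.Ioo x0 (x0 + l), v x ^ (1 - pconj p)) ^ (1/(pconj p))


/- Auxiliary lemmas -/


lemma ceil_eq_of {r : ℝ} {n : ℕ} (h1 : (n:ℝ) - 1 < r) (h2 : r ≤ n) : ⌈r⌉₊ = n := by
  refine le_antisymm (Nat.ceil_le.2 h2) ?_
  rcases n with _ | m
  · exact Nat.zero_le _
  · exact Nat.succ_le_of_lt (Nat.lt_ceil.2 (by push_cast at h1 ⊢; linarith))

lemma lt_of_ceil_eq {r : ℝ} {n : ℕ} (hn : 1 ≤ n) (h : ⌈r⌉₊ = n) : (n:ℝ) - 1 < r := by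
  by_contra hc
  push_neg at hc
  have h2 : ⌈r⌉₊ ≤ n - 1 := Nat.ceil_le.2 (by push_cast [Nat.cast_sub hn]; linarith)
  omega

lemma one_le_rpow_nat {n : ℕ} (hn : 1 ≤ n) {s : ℝ} (hs : 0 ≤ s) : (1:ℝ≥0∞) ≤ (n:ℝ≥0∞) ^ s := by
  calc (1:ℝ≥0∞) = 1 ^ s := (ENNReal.one_rpow s).symm
  _ ≤ (n:ℝ≥0∞) ^ s := ENNReal.rpow_le_rpow (by exact_mod_cast hn) hs

lemma rpow_nat_neg_le_one {n : ℕ} (hn : 1 ≤ n) {s : ℝ} (hs : 0 ≤ s) : (n:ℝ≥0∞) ^ (-s) ≤ 1 := by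
  rw [ENNReal.rpow_neg]
  exact ENNReal.inv_le_one.2 (one_le_rpow_nat hn hs)

lemma rpow_le_rpow_neg {x y : ℝ≥0∞} {c : ℝ} (h : x ≤ y) (hc : c ≤ 0) : y ^ c ≤ x ^ c := by
  rw [show c = -(-c) by ring, ENNReal.rpow_neg y, ENNReal.rpow_neg x]
  exact ENNReal.inv_le_inv.2 (ENNReal.rpow_le_rpow h (neg_nonneg.2 hc))

section UW
variable {a b p q : ℝ}

lemma uW_one {x : ℝ} (hx : |x| ≤ 1) : uW a b q x = 1 := by
  simp [uW, hx]

lemma uW_big (ha : 0 < a) (hab : a < b) {x : ℝ} {n : ℕ} (hn : 1 ≤ n)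
    (h1 : 1 + ((n:ℝ)-1)*(a+b) < |x|) (h2 : |x| ≤ 1 + ((n:ℝ)-1)*(a+b) + (b-a)/2) :
    uW a b q x = (n:ℝ≥0∞) ^ q := by
  have hab0 : (0:ℝ) < a + b := by linarith
  have hn1 : (1:ℝ) ≤ (n:ℝ) := by exact_mod_cast hn
  have hnn : (0:ℝ) ≤ ((n:ℝ)-1)*(a+b) := mul_nonneg (by linarith) hab0.le
  have hx1 : ¬ |x| ≤ 1 := by push_neg; linarith
  have hceil : ⌈(|x|-1)/(a+b)⌉₊ = n := by
    apply ceil_eq_of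
    · rw [lt_div_iff₀ hab0]; linarith
    · rw [div_le_iff₀ hab0]; nlinarith
  simp only [uW, if_neg hx1, hceil, if_pos h2]

lemma uW_small (ha : 0 < a) (hab : a < b) {x : ℝ} {n : ℕ} (hn : 1 ≤ n)
    (h1 : 1 + ((n:ℝ)-1)*(a+b) + (b-a)/2 < |x|) (h2 : |x| ≤ 1 + ((n:ℝ)-1)*(a+b) + (a+b)) :
    uW a b q x = (n:ℝ≥0∞) ^ (-q) := by
  have hab0 : (0:ℝ) < a + b := by linarith
  have hn1 : (1:ℝ) ≤ (n:ℝ) := by exact_mod_cast hn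
  have hnn : (0:ℝ) ≤ ((n:ℝ)-1)*(a+b) := mul_nonneg (by linarith) hab0.le
  have hx1 : ¬ |x| ≤ 1 := by push_neg; linarith
  have hceil : ⌈(|x|-1)/(a+b)⌉₊ = n := by
    apply ceil_eq_of
    · rw [lt_div_iff₀ hab0]; linarith
    · rw [div_le_iff₀ hab0]; nlinarith
  have hcond : ¬ |x| ≤ 1 + ((n:ℝ)-1)*(a+b) + (b-a)/2 := by push_neg; exact h1
  simp only [uW, if_neg hx1, hceil, if_neg hcond]

lemma uW_le (ha : 0 < a) (hab : a < b) (hq : 0 < q) {x : ℝ} {N : ℕ} (hN : 1 ≤ N)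
    (h2 : |x| ≤ 1 + ((N:ℝ)-1)*(a+b) + (a+b)/2) :
    uW a b q x ≤ (N:ℝ≥0∞) ^ q := by
  have hab0 : (0:ℝ) < a + b := by linarith
  have hone : (1:ℝ≥0∞) ≤ (N:ℝ≥0∞) ^ q := one_le_rpow_nat hN hq.le
  by_cases hx : |x| ≤ 1
  · rw [uW_one hx]; exact hone
  · push_neg at hx
    simp only [uW, if_neg (not_le.2 hx)]
    have hn1 : 1 ≤ ⌈(|x|-1)/(a+b)⌉₊ := Nat.one_le_iff_ne_zero.2 (by
      simp only [ne_eq, Nat.ceil_eq_zero, not_le]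
      exact div_pos (by linarith) hab0)
    have hnN : ⌈(|x|-1)/(a+b)⌉₊ ≤ N := Nat.ceil_le.2 (by
      rw [div_le_iff₀ hab0]
      have hN1 : (1:ℝ) ≤ (N:ℝ) := by exact_mod_cast hN
      nlinarith)
    split
    · exact ENNReal.rpow_le_rpow (by exact_mod_cast hnN) hq.le
    · exact le_trans (rpow_nat_neg_le_one hn1 hq.le) hone

lemma uW_gt_one (ha : 0 < a) (hab : a < b) (hq : 0 < q) {x : ℝ} (h : 1 < uW a b q x) :
    ∃ n : ℕ, 2 ≤ n ∧ 1 + ((n:ℝ)-1)*(a+b) < |x| ∧ |x| ≤ 1 + ((n:ℝ)-1)*(a+b) + (b-a)/2 := by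
  have hab0 : (0:ℝ) < a + b := by linarith
  by_cases hx : |x| ≤ 1
  · rw [uW_one hx] at h; exact absurd h (lt_irrefl _)
  push_neg at hx
  simp only [uW, if_neg (not_le.2 hx)] at h
  set n := ⌈(|x|-1)/(a+b)⌉₊ with hn
  have hn1 : 1 ≤ n := Nat.one_le_iff_ne_zero.2 (by
    simp only [hn, ne_eq, Nat.ceil_eq_zero, not_le]
    exact div_pos (by linarith) hab0)
  by_cases hcond : |x| ≤ 1 + ((n:ℝ)-1)*(a+b) + (b-a)/2
  · rw [if_pos hcond] at h
    have hn2 : 2 ≤ n := by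
      by_contra hlt
      have : n = 1 := by omega
      rw [this] at h
      simp at h
    refine ⟨n, hn2, ?_, hcond⟩
    have := lt_of_ceil_eq hn1 hn.symm
    rw [lt_div_iff₀ hab0] at this
    linarith [this]
  · rw [if_neg hcond] at h
    exact absurd h (not_lt.2 (rpow_nat_neg_le_one hn1 hq.le))

end UW
section VW
variable {a b p q : ℝ}

lemma vW_one {x : ℝ} (hx : |x| ≤ 1 + b) : vW a b p x = 1 := by
  simp [vW, hx]

lemma vW_big (ha : 0 < a) (hab : a < b) {x : ℝ} {n : ℕ} (hn : 2 ≤ n)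
    (h1 : 1 + ((n:ℝ)-1)*(a+b) - a < |x|) (h2 : |x| ≤ 1 + ((n:ℝ)-1)*(a+b) + (a+b)/2) :
    vW a b p x = (n:ℝ≥0∞) ^ p := by
  have hab0 : (0:ℝ) < a + b := by linarith
  have hn2 : (2:ℝ) ≤ (n:ℝ) := by exact_mod_cast hn
  have hnn : (0:ℝ) ≤ ((n:ℝ)-2)*(a+b) := mul_nonneg (by linarith) hab0.le
  have hx1 : ¬ |x| ≤ 1 + b := by push_neg; nlinarith
  have hceil : ⌈(|x|-1-b)/(a+b)⌉₊ = n - 1 := by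
    apply ceil_eq_of
    · push_cast [Nat.cast_sub (by omega : 1 ≤ n)]
      rw [lt_div_iff₀ hab0]; nlinarith
    · push_cast [Nat.cast_sub (by omega : 1 ≤ n)]
      rw [div_le_iff₀ hab0]; nlinarith
  have hsub : n - 1 + 1 = n := by omega
  have hcond : |x| ≤ 1 + ((n:ℝ)-1)*a + (n:ℝ)*b - (b-a)/2 := by nlinarith
  simp only [vW, if_neg hx1, hceil, hsub, if_pos hcond]

lemma vW_small (ha : 0 < a) (hab : a < b) {x : ℝ} {n : ℕ} (hn : 2 ≤ n)
    (h1 : 1 + ((n:ℝ)-1)*(a+b) + (a+b)/2 < |x|) (h2 : |x| ≤ 1 + ((n:ℝ)-1)*(a+b) + b) :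
    vW a b p x = (n:ℝ≥0∞) ^ (-p) := by
  have hab0 : (0:ℝ) < a + b := by linarith
  have hn2 : (2:ℝ) ≤ (n:ℝ) := by exact_mod_cast hn
  have hnn : (0:ℝ) ≤ ((n:ℝ)-2)*(a+b) := mul_nonneg (by linarith) hab0.le
  have hx1 : ¬ |x| ≤ 1 + b := by push_neg; nlinarith
  have hceil : ⌈(|x|-1-b)/(a+b)⌉₊ = n - 1 := by
    apply ceil_eq_of
    · push_cast [Nat.cast_sub (by omega : 1 ≤ n)]
      rw [lt_div_iff₀ hab0]; nlinarith
    · push_cast [Nat.cast_sub (by omega : 1 ≤ n)]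
      rw [div_le_iff₀ hab0]; nlinarith
  have hsub : n - 1 + 1 = n := by omega
  have hcond : ¬ |x| ≤ 1 + ((n:ℝ)-1)*a + (n:ℝ)*b - (b-a)/2 := by push_neg; nlinarith
  simp only [vW, if_neg hx1, hceil, hsub, if_neg hcond]

lemma vW_ge (ha : 0 < a) (hab : a < b) (hp0 : 0 < p) {x : ℝ} {m : ℕ} (hm : 2 ≤ m)
    (h1 : 1 + ((m:ℝ)-1)*(a+b) + (b-a)/2 < |x|) (h2 : |x| < 1 + ((m:ℝ)-1)*(a+b) + (a+b)) :
    (m:ℝ≥0∞) ^ (-p) ≤ vW a b p x := by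
  have hab0 : (0:ℝ) < a + b := by linarith
  have hm2 : (2:ℝ) ≤ (m:ℝ) := by exact_mod_cast hm
  have hnn : (0:ℝ) ≤ ((m:ℝ)-2)*(a+b) := mul_nonneg (by linarith) hab0.le
  have hx1 : ¬ |x| ≤ 1 + b := by push_neg; nlinarith
  simp only [vW, if_neg hx1]
  set k := ⌈(|x|-1-b)/(a+b)⌉₊ + 1 with hk
  have hk_ub : k ≤ m + 1 := by
    have : ⌈(|x|-1-b)/(a+b)⌉₊ ≤ m := Nat.ceil_le.2 (by rw [div_le_iff₀ hab0]; nlinarith)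
    omega
  have hk_lb : m ≤ k := by
    have : m - 2 < ⌈(|x|-1-b)/(a+b)⌉₊ := Nat.lt_ceil.2 (by
      push_cast [Nat.cast_sub (by omega : 2 ≤ m)]
      rw [lt_div_iff₀ hab0]; nlinarith)
    omega
  have hmle : ∀ j : ℕ, m ≤ j → (m:ℝ≥0∞) ^ (-p) ≤ (j:ℝ≥0∞) ^ p := fun j hj =>
    le_trans (rpow_nat_neg_le_one (by omega) hp0.le)
      (one_le_rpow_nat (by omega) hp0.le)
  rcases (by omega : k = m ∨ k = m + 1) with hkm | hkm
  · rw [hkm]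
    split
    · exact hmle m le_rfl
    · exact le_rfl
  · rw [hkm]
    have hcond : |x| ≤ 1 + ((m:ℝ)+1-1)*a + ((m:ℝ)+1)*b - (b-a)/2 := by nlinarith
    rw [if_pos (by push_cast; exact hcond)]
    exact hmle (m+1) (by omega)

lemma vW_lt_one (ha : 0 < a) (hab : a < b) (hp0 : 0 < p) {x : ℝ} (h : vW a b p x < 1) :
    ∃ m : ℕ, 2 ≤ m ∧ 1 + ((m:ℝ)-1)*(a+b) + (a+b)/2 < |x| ∧ |x| ≤ 1 + ((m:ℝ)-1)*(a+b) + b := by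
  have hab0 : (0:ℝ) < a + b := by linarith
  by_cases hx : |x| ≤ 1 + b
  · rw [vW_one hx] at h; exact absurd h (lt_irrefl _)
  push_neg at hx
  simp only [vW, if_neg (not_le.2 hx)] at h
  set k := ⌈(|x|-1-b)/(a+b)⌉₊ + 1 with hk
  have hc1 : 1 ≤ ⌈(|x|-1-b)/(a+b)⌉₊ := Nat.one_le_iff_ne_zero.2 (by
    simp only [ne_eq, Nat.ceil_eq_zero, not_le]
    exact div_pos (by linarith) hab0)
  have hk2 : 2 ≤ k := by omega
  by_cases hcond : |x| ≤ 1 + ((k:ℝ)-1)*a + (k:ℝ)*b - (b-a)/2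
  · rw [if_pos hcond] at h
    exact absurd h (not_lt.2 (one_le_rpow_nat (by omega) hp0.le))
  · push_neg at hcond
    refine ⟨k, hk2, by nlinarith [hcond], ?_⟩
    have hle : (|x|-1-b)/(a+b) ≤ ((k:ℝ) - 1) := by
      have := Nat.le_ceil ((|x|-1-b)/(a+b))
      have hcast : ((⌈(|x|-1-b)/(a+b)⌉₊ : ℝ)) = (k:ℝ) - 1 := by
        rw [hk]; push_cast; ring
      linarith [hcast ▸ this]
    rw [div_le_iff₀ hab0] at hle
    nlinarith
end VW
section Dich
variable {a b p q : ℝ}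

lemma pconj_pos (hp : 1 < p) : 0 < pconj p := div_pos (by linarith) (by linarith)

lemma one_sub_pconj_nonpos (hp : 1 < p) : 1 - pconj p ≤ 0 := by
  have h : (1:ℝ) ≤ p / (p - 1) := (one_le_div (by linarith)).2 (by linarith)
  simp only [pconj]; linarith

lemma exp_e1 (hp : 1 < p) : p * (1 - pconj p) = -(pconj p) := by
  have : p - 1 ≠ 0 := by linarith
  unfold pconj
  field_simp
  ring

lemma exp_e2 (hp : 1 < p) : (-p) * (1 - pconj p) = pconj p := by
  have := exp_e1 hp; linarith

lemma exp_e4 (hp : 1 < p) : pconj p * (1 / pconj p) = 1 :=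
  mul_one_div_cancel (ne_of_gt (pconj_pos hp))

lemma exp_e5 (hp : 1 < p) : 1 / pconj p = 1 - 1/p := by
  have h1 : p - 1 ≠ 0 := by linarith
  have h2 : p ≠ 0 := by linarith
  unfold pconj
  field_simp

/-- Key dichotomy: on an interval of length `l ≤ a`, bounds `M`, `K` for `u` and
`σ = v^{1-p'}` with `M^{1/q} K^{1/p'} ≤ 1`. -/
lemma dichotomy (ha : 0 < a) (hab : a < b) (hp : 1 < p) (hq : 0 < q)
    (x0 l : ℝ) (hl : 0 < l) (hla : l ≤ a) :
    ∃ M K : ℝ≥0∞, (∀ x ∈ Ioo x0 (x0+l), uW a b q x ≤ M) ∧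
      (∀ x ∈ Ioo x0 (x0+l), vW a b p x ^ (1 - pconj p) ≤ K) ∧
      M ^ (1/q) * K ^ (1/pconj p) ≤ 1 := by
  have hq' : q ≠ 0 := ne_of_gt hq
  have hp0 : 0 < p := by linarith
  have hp' : pconj p ≠ 0 := ne_of_gt (pconj_pos hp)
  have habs : ∀ x ∈ Ioo x0 (x0+l), ∀ y ∈ Ioo x0 (x0+l), |x| - |y| < l := by
    intro x hx y hy
    have h1 := abs_sub_abs_le_abs_sub x y
    have h2 : |x - y| < l := abs_sub_lt_iff.2 ⟨by linarith [hx.1, hx.2, hy.1, hy.2],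
      by linarith [hx.1, hx.2, hy.1, hy.2]⟩
    linarith
  by_cases hA : ∃ x1 ∈ Ioo x0 (x0+l), 1 < uW a b q x1
  · obtain ⟨x1, hx1, hgt⟩ := hA
    obtain ⟨n, hn2, hc1, hc2⟩ := uW_gt_one ha hab hq hgt
    refine ⟨(n:ℝ≥0∞)^q, (n:ℝ≥0∞)^(-(pconj p)), ?_, ?_, ?_⟩
    · intro x hx
      apply uW_le ha hab hq (by omega : 1 ≤ n)
      have := habs x hx x1 hx1
      linarith
    · intro x hx
      have h1 := habs x hx x1 hx1
      have h2 := habs x1 hx1 x hx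
      rw [vW_big ha hab hn2 (by linarith) (by linarith)]
      rw [← ENNReal.rpow_mul, exp_e1 hp]
    · rw [← ENNReal.rpow_mul, ← ENNReal.rpow_mul, mul_one_div_cancel hq',
        neg_mul, exp_e4 hp, ENNReal.rpow_one, ENNReal.rpow_neg_one]
      exact le_of_eq (ENNReal.mul_inv_cancel (by exact_mod_cast (by omega : n ≠ 0))
        (ENNReal.natCast_ne_top n))
  · by_cases hB : ∃ x1 ∈ Ioo x0 (x0+l), vW a b p x1 < 1
    · obtain ⟨x1, hx1, hlt⟩ := hB
      obtain ⟨m, hm2, hc1, hc2⟩ := vW_lt_one ha hab hp0 hlt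
      refine ⟨(m:ℝ≥0∞)^(-q), (m:ℝ≥0∞)^(pconj p), ?_, ?_, ?_⟩
      · intro x hx
        have h1 := habs x hx x1 hx1
        have h2 := habs x1 hx1 x hx
        rw [uW_small ha hab (by omega : 1 ≤ m) (by linarith) (by linarith)]
      · intro x hx
        have h1 := habs x hx x1 hx1
        have h2 := habs x1 hx1 x hx
        have hge : (m:ℝ≥0∞)^(-p) ≤ vW a b p x :=
          vW_ge ha hab hp0 hm2 (by linarith) (by linarith)
        calc vW a b p x ^ (1 - pconj p) ≤ ((m:ℝ≥0∞)^(-p)) ^ (1 - pconj p) :=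
              rpow_le_rpow_neg hge (one_sub_pconj_nonpos hp)
          _ = (m:ℝ≥0∞)^(pconj p) := by rw [← ENNReal.rpow_mul, exp_e2 hp]
      · rw [← ENNReal.rpow_mul, ← ENNReal.rpow_mul, neg_mul, mul_one_div_cancel hq',
          exp_e4 hp, ENNReal.rpow_one, ENNReal.rpow_neg_one]
        rw [mul_comm]
        exact le_of_eq (ENNReal.mul_inv_cancel (by exact_mod_cast (by omega : m ≠ 0))
          (ENNReal.natCast_ne_top m))
    · push_neg at hA hB
      refine ⟨1, 1, fun x hx => hA x hx, ?_, by simp⟩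
      intro x hx
      calc vW a b p x ^ (1 - pconj p) ≤ (1:ℝ≥0∞) ^ (1 - pconj p) :=
            rpow_le_rpow_neg (hB x hx) (one_sub_pconj_nonpos hp)
        _ = 1 := ENNReal.one_rpow _
end Dich
section Parts
variable {a b p q α : ℝ}

lemma interval_bound (ha : 0 < a) (hab : a < b) (hp : 1 < p) (hpq : p ≤ q)
    (hcond : 0 ≤ 1/q - 1/p + α) (x0 l : ℝ) (hl : 0 < l) (hla : l ≤ a) :
    ENNReal.ofReal (l ^ (α - 1)) *
      (∫⁻ x in Set.Ioo x0 (x0 + l), uW a b q x) ^ (1/q) *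
      (∫⁻ x in Set.Ioo x0 (x0 + l), vW a b p x ^ (1 - pconj p)) ^ (1/(pconj p)) ≤
      ENNReal.ofReal (a ^ (1/q - 1/p + α)) := by
  have hq : 0 < q := by linarith
  have hq' : (0:ℝ) ≤ 1/q := by positivity
  have hp'pos := pconj_pos hp
  have hp'' : (0:ℝ) ≤ 1/pconj p := by positivity
  obtain ⟨M, K, hM, hK, hMK⟩ := dichotomy ha hab hp hq x0 l hl hla
  have hIu : (∫⁻ x in Set.Ioo x0 (x0 + l), uW a b q x) ≤ M * ENNReal.ofReal l := by
    calc (∫⁻ x in Set.Ioo x0 (x0 + l), uW a b q x) ≤ ∫⁻ _ in Set.Ioo x0 (x0+l), M :=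
          setLIntegral_mono' measurableSet_Ioo hM
      _ = M * volume (Set.Ioo x0 (x0+l)) := setLIntegral_const _ _
      _ = M * ENNReal.ofReal l := by rw [Real.volume_Ioo]; norm_num
  have hIv : (∫⁻ x in Set.Ioo x0 (x0 + l), vW a b p x ^ (1 - pconj p)) ≤
      K * ENNReal.ofReal l := by
    calc (∫⁻ x in Set.Ioo x0 (x0 + l), vW a b p x ^ (1 - pconj p)) ≤
          ∫⁻ _ in Set.Ioo x0 (x0+l), K := setLIntegral_mono' measurableSet_Ioo hK
      _ = K * volume (Set.Ioo x0 (x0+l)) := setLIntegral_const _ _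
      _ = K * ENNReal.ofReal l := by rw [Real.volume_Ioo]; norm_num
  have hexp : α - 1 + (1/q + 1/pconj p) = 1/q - 1/p + α := by
    rw [exp_e5 hp]; ring
  calc ENNReal.ofReal (l ^ (α - 1)) *
      (∫⁻ x in Set.Ioo x0 (x0 + l), uW a b q x) ^ (1/q) *
      (∫⁻ x in Set.Ioo x0 (x0 + l), vW a b p x ^ (1 - pconj p)) ^ (1/(pconj p))
      ≤ ENNReal.ofReal (l ^ (α - 1)) * (M * ENNReal.ofReal l) ^ (1/q) *
        (K * ENNReal.ofReal l) ^ (1/(pconj p)) := by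
        gcongr
    _ = (M ^ (1/q) * K ^ (1/pconj p)) *
        (ENNReal.ofReal (l ^ (α - 1)) * ((ENNReal.ofReal l) ^ (1/q) *
          (ENNReal.ofReal l) ^ (1/pconj p))) := by
        rw [ENNReal.mul_rpow_of_nonneg _ _ hq', ENNReal.mul_rpow_of_nonneg _ _ hp'']
        ring
    _ ≤ 1 * (ENNReal.ofReal (l ^ (α - 1)) * ((ENNReal.ofReal l) ^ (1/q) *
          (ENNReal.ofReal l) ^ (1/pconj p))) := by gcongr
    _ = ENNReal.ofReal (l ^ (α - 1) * (l ^ (1/q) * l ^ (1/pconj p))) := by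
        rw [one_mul, ENNReal.ofReal_rpow_of_pos hl, ENNReal.ofReal_rpow_of_pos hl,
          ← ENNReal.ofReal_mul (by positivity), ← ENNReal.ofReal_mul (by positivity)]
    _ = ENNReal.ofReal (l ^ (1/q - 1/p + α)) := by
        rw [← Real.rpow_add hl, ← Real.rpow_add hl, hexp]
    _ ≤ ENNReal.ofReal (a ^ (1/q - 1/p + α)) :=
        ENNReal.ofReal_le_ofReal (Real.rpow_le_rpow hl.le hla hcond)

lemma part1 (ha : 0 < a) (hab : a < b) (hp : 1 < p) (hpq : p ≤ q)
    (hcond : 0 ≤ 1/q - 1/p + α) :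
    frakA a p q α (uW a b q) (vW a b p) ≤ ENNReal.ofReal (a ^ (1/q - 1/p + α)) := by
  rw [frakA]
  exact iSup_le fun x0 => iSup_le fun l => iSup_le fun hl =>
    interval_bound ha hab hp hpq hcond x0 l hl.1 hl.2

end Parts
section Part2
variable {a b p q α : ℝ}

lemma lower_bound (ha : 0 < a) (hab : a < b) (hp : 1 < p) (hpq : p ≤ q)
    {n : ℕ} (hn : 2 ≤ n) :
    (n:ℝ≥0∞) * (n:ℝ≥0∞) * (ENNReal.ofReal (b ^ (α-1)) *
      (ENNReal.ofReal ((b-a)/2)) ^ (1/q) * (ENNReal.ofReal ((b-a)/2)) ^ (1/pconj p)) ≤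
      frakA b p q α (uW a b q) (vW a b p) := by
  have hq : 0 < q := by linarith
  have hq' : (0:ℝ) ≤ 1/q := by positivity
  have hb : 0 < b := lt_trans ha hab
  have hp'pos := pconj_pos hp
  have hp'' : (0:ℝ) ≤ 1/pconj p := by positivity
  have hn2 : (2:ℝ) ≤ (n:ℝ) := by exact_mod_cast hn
  have hab0 : (0:ℝ) < a + b := by linarith
  have hnn : (0:ℝ) ≤ ((n:ℝ)-1)*(a+b) := mul_nonneg (by linarith) hab0.le
  set x0 : ℝ := 1 + ((n:ℝ)-1)*(a+b) with hx0
  have hx0pos : 0 < x0 := by rw [hx0]; linarith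
  have habs : ∀ y : ℝ, x0 < y → |y| = y := fun y hy => abs_of_pos (lt_trans hx0pos hy)
  -- lower bound for the u integral
  have hIu : ((n:ℝ≥0∞)^q) * ENNReal.ofReal ((b-a)/2) ≤
      ∫⁻ x in Set.Ioo x0 (x0 + b), uW a b q x := by
    calc ((n:ℝ≥0∞)^q) * ENNReal.ofReal ((b-a)/2)
        = ∫⁻ _ in Set.Ioo x0 (x0 + (b-a)/2), ((n:ℝ≥0∞)^q) := by
          rw [setLIntegral_const, Real.volume_Ioo]; norm_num
      _ ≤ ∫⁻ x in Set.Ioo x0 (x0 + (b-a)/2), uW a b q x := by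
          refine setLIntegral_mono' measurableSet_Ioo fun x hx => le_of_eq ?_
          rw [uW_big ha hab (by omega : 1 ≤ n) (by rw [habs x hx.1]; exact hx.1)
            (by rw [habs x hx.1]; linarith [hx.2])]
      _ ≤ ∫⁻ x in Set.Ioo x0 (x0 + b), uW a b q x :=
          lintegral_mono_set (Set.Ioo_subset_Ioo le_rfl (by linarith))
  -- lower bound for the σ integral
  have hIv : ((n:ℝ≥0∞)^(pconj p)) * ENNReal.ofReal ((b-a)/2) ≤
      ∫⁻ x in Set.Ioo x0 (x0 + b), vW a b p x ^ (1 - pconj p) := by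
    calc ((n:ℝ≥0∞)^(pconj p)) * ENNReal.ofReal ((b-a)/2)
        = ∫⁻ _ in Set.Ioo (x0 + (a+b)/2) (x0 + b), ((n:ℝ≥0∞)^(pconj p)) := by
          rw [setLIntegral_const, Real.volume_Ioo]
          congr 1
          ring
      _ ≤ ∫⁻ x in Set.Ioo (x0 + (a+b)/2) (x0 + b), vW a b p x ^ (1 - pconj p) := by
          refine setLIntegral_mono' measurableSet_Ioo fun x hx => le_of_eq ?_
          have hxx : x0 < x := by linarith [hx.1]
          rw [vW_small ha hab hn (by rw [habs x hxx]; linarith [hx.1])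
            (by rw [habs x hxx]; linarith [hx.2]),
            ← ENNReal.rpow_mul, exp_e2 hp]
      _ ≤ ∫⁻ x in Set.Ioo x0 (x0 + b), vW a b p x ^ (1 - pconj p) :=
          lintegral_mono_set (Set.Ioo_subset_Ioo (by linarith) le_rfl)
  have hterm : ENNReal.ofReal (b ^ (α-1)) *
      (∫⁻ x in Set.Ioo x0 (x0 + b), uW a b q x) ^ (1/q) *
      (∫⁻ x in Set.Ioo x0 (x0 + b), vW a b p x ^ (1 - pconj p)) ^ (1/pconj p) ≤
      frakA b p q α (uW a b q) (vW a b p) := by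
    rw [frakA]
    exact le_iSup_of_le x0 (le_iSup_of_le b (le_iSup_of_le ⟨hb, le_rfl⟩ le_rfl))
  refine le_trans ?_ hterm
  have h1 : (n:ℝ≥0∞) * (ENNReal.ofReal ((b-a)/2)) ^ (1/q) ≤
      (∫⁻ x in Set.Ioo x0 (x0 + b), uW a b q x) ^ (1/q) := by
    calc (n:ℝ≥0∞) * (ENNReal.ofReal ((b-a)/2)) ^ (1/q)
        = (((n:ℝ≥0∞)^q) * ENNReal.ofReal ((b-a)/2)) ^ (1/q) := by
          rw [ENNReal.mul_rpow_of_nonneg _ _ hq', ← ENNReal.rpow_mul,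
            mul_one_div_cancel (ne_of_gt hq), ENNReal.rpow_one]
      _ ≤ _ := ENNReal.rpow_le_rpow hIu hq'
  have h2 : (n:ℝ≥0∞) * (ENNReal.ofReal ((b-a)/2)) ^ (1/pconj p) ≤
      (∫⁻ x in Set.Ioo x0 (x0 + b), vW a b p x ^ (1 - pconj p)) ^ (1/pconj p) := by
    calc (n:ℝ≥0∞) * (ENNReal.ofReal ((b-a)/2)) ^ (1/pconj p)
        = (((n:ℝ≥0∞)^(pconj p)) * ENNReal.ofReal ((b-a)/2)) ^ (1/pconj p) := by
          rw [ENNReal.mul_rpow_of_nonneg _ _ hp'', ← ENNReal.rpow_mul,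
            exp_e4 hp, ENNReal.rpow_one]
      _ ≤ _ := ENNReal.rpow_le_rpow hIv hp''
  calc (n:ℝ≥0∞) * (n:ℝ≥0∞) * (ENNReal.ofReal (b ^ (α-1)) *
      (ENNReal.ofReal ((b-a)/2)) ^ (1/q) * (ENNReal.ofReal ((b-a)/2)) ^ (1/pconj p))
      = ENNReal.ofReal (b ^ (α-1)) * ((n:ℝ≥0∞) * (ENNReal.ofReal ((b-a)/2)) ^ (1/q)) *
        ((n:ℝ≥0∞) * (ENNReal.ofReal ((b-a)/2)) ^ (1/pconj p)) := by ring
    _ ≤ _ := by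
        apply mul_le_mul' (mul_le_mul' le_rfl h1) h2

lemma part2 (ha : 0 < a) (hab : a < b) (hp : 1 < p) (hpq : p ≤ q) :
    frakA b p q α (uW a b q) (vW a b p) = ∞ := by
  have hq : 0 < q := by linarith
  have hb : 0 < b := lt_trans ha hab
  have hp'pos := pconj_pos hp
  set c0 : ℝ≥0∞ := ENNReal.ofReal (b ^ (α-1)) *
      (ENNReal.ofReal ((b-a)/2)) ^ (1/q) * (ENNReal.ofReal ((b-a)/2)) ^ (1/pconj p) with hc0
  have hr0 : (0:ℝ≥0∞) < ENNReal.ofReal ((b-a)/2) := ENNReal.ofReal_pos.2 (by linarith)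
  have hc0ne : c0 ≠ 0 := by
    rw [hc0]
    refine mul_ne_zero (mul_ne_zero ?_ ?_) ?_
    · exact ne_of_gt (ENNReal.ofReal_pos.2 (Real.rpow_pos_of_pos hb _))
    · exact ne_of_gt (ENNReal.rpow_pos hr0 ENNReal.ofReal_ne_top)
    · exact ne_of_gt (ENNReal.rpow_pos hr0 ENNReal.ofReal_ne_top)
  have hall : ∀ n : ℕ, (n:ℝ≥0∞) * c0 ≤ frakA b p q α (uW a b q) (vW a b p) := by
    intro n
    refine le_trans (mul_le_mul' ?_ le_rfl) (lower_bound ha hab hp hpq (by omega : 2 ≤ n + 2))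
    calc (n:ℝ≥0∞) ≤ ((((n+2)*(n+2) : ℕ)):ℝ≥0∞) := by
          exact_mod_cast Nat.cast_le.2 (by nlinarith : n ≤ (n+2)*(n+2))
      _ = ((n+2:ℕ):ℝ≥0∞) * ((n+2:ℕ):ℝ≥0∞) := by push_cast; ring
  have htop : (⊤:ℝ≥0∞) ≤ frakA b p q α (uW a b q) (vW a b p) := by
    have : (⊤:ℝ≥0∞) = (⨆ n : ℕ, (n:ℝ≥0∞)) * c0 := by
      rw [ENNReal.iSup_natCast, ENNReal.top_mul hc0ne]
    rw [this, ENNReal.iSup_mul]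
    exact iSup_le hall
  exact top_le_iff.1 htop

end Part2

/-- The pair `(uW, vW)` satisfies `[u,v]_{𝔄^a_{p,q,α}} ≤ a^{1/q-1/p+α} < ∞` but
`[u,v]_{𝔄^b_{p,q,α}} = ∞`. -/
theorem frakA_a_finite_b_infinite (a b p q α : ℝ) (ha : 0 < a) (hab : a < b)
    (hp : 1 < p) (hpq : p ≤ q) (hα : 0 ≤ α) (hα1 : α < 1)
    (hcond : 0 ≤ 1/q - 1/p + α) :
    frakA a p q α (uW a b q) (vW a b p) ≤ ENNReal.ofReal (a ^ (1/q - 1/p + α)) ∧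
    frakA b p q α (uW a b q) (vW a b p) = ∞ := by
  exact ⟨part1 ha hab hp hpq hcond, part2 ha hab hp hpq⟩

end
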